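/- Let n ≥ 1 and let X = {x_1 < x_2 < ... < x_s} ⊆ {1,...,n} be a set of size s. Then the number of permutations σ ∈ S_n such that every element of X is a descent top of σ (i.e. X ⊆ DT(σ)) equals (n − s)! · ∏_{i=1}^{s} (x_i − i). -/

import Mathlib

/-- Descent top set of a permutation `σ` of `Fin (m+1)` (representing `{1,...,m+1}`):
`DT(σ) = {σ(i) : i ∈ {1,...,m}, σ(i) > σ(i+1)}`. -/
def descentTops (m : ℕ) (σ : Equiv.Perm (Fin (m + 1))) : Finset (Fin (m + 1)) :=
  (Finset.univ.filter fun i : Fin m => σ i.succ < σ i.castSucc).image fun i => σ i.castSucc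

lemma mem_descentTops {m : ℕ} {σ : Equiv.Perm (Fin (m+1))} {y : Fin (m+1)} :
    y ∈ descentTops m σ ↔ ∃ i : Fin m, σ i.succ < σ i.castSucc ∧ σ i.castSucc = y := by
  simp [descentTops, Finset.mem_image, Finset.mem_filter, and_comm]

def ins {m : ℕ} (p : Fin (m+2)) (σ' : Equiv.Perm (Fin (m+1))) : Equiv.Perm (Fin (m+2)) :=
  ((finSuccEquiv' p).trans (Equiv.optionCongr σ')).trans (finSuccEquiv' (Fin.last (m+1))).symm

lemma ins_self {m : ℕ} (p : Fin (m+2)) (σ' : Equiv.Perm (Fin (m+1))) :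
    ins p σ' p = Fin.last (m+1) := by
  simp [ins, finSuccEquiv'_at, finSuccEquiv'_symm_none]

lemma ins_succAbove {m : ℕ} (p : Fin (m+2)) (σ' : Equiv.Perm (Fin (m+1))) (k : Fin (m+1)) :
    ins p σ' (p.succAbove k) = (σ' k).castSucc := by
  simp [ins, finSuccEquiv'_succAbove, finSuccEquiv'_symm_some, Fin.succAbove_last]

lemma sa_val {n : ℕ} (p : Fin (n+1)) (k : Fin n) :
    (p.succAbove k).val = if k.val < p.val then k.val else k.val + 1 := by
  rcases lt_or_ge k.val p.val with h | h
  · rw [Fin.succAbove_of_castSucc_lt _ _ (by simpa [Fin.lt_def] using h)]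
    simp [h]
  · rw [Fin.succAbove_of_le_castSucc _ _ (by simpa [Fin.le_def] using h)]
    simp [Nat.not_lt.mpr h]

lemma ins_injective {m : ℕ} : Function.Injective
    (fun z : Fin (m+2) × Equiv.Perm (Fin (m+1)) => ins z.1 z.2) := by
  rintro ⟨p, σ⟩ ⟨q, τ⟩ h
  simp only at h
  have hp : p = q := by
    have h1 : ins q τ p = Fin.last (m+1) := by rw [← h, ins_self]
    have h2 : ins q τ q = Fin.last (m+1) := ins_self q τ
    exact (ins q τ).injective (h1.trans h2.symm)
  subst hp
  have hσ : σ = τ := by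
    apply Equiv.ext
    intro k
    have h1 : ins p σ (p.succAbove k) = ins p τ (p.succAbove k) := by rw [h]
    rw [ins_succAbove, ins_succAbove] at h1
    exact Fin.castSucc_injective _ h1
  rw [hσ]

noncomputable def insEquiv (m : ℕ) : Fin (m+2) × Equiv.Perm (Fin (m+1)) ≃ Equiv.Perm (Fin (m+2)) :=
  Equiv.ofBijective (fun z => ins z.1 z.2)
    ((Fintype.bijective_iff_injective_and_card _).mpr ⟨ins_injective, by
      simp [Fintype.card_perm, Nat.factorial_succ]⟩)

lemma insEquiv_apply {m : ℕ} (z) : insEquiv m z = ins z.1 z.2 := rfl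

-- (a)
lemma dt_last {m : ℕ} (p : Fin (m+2)) (σ' : Equiv.Perm (Fin (m+1))) :
    Fin.last (m+1) ∈ descentTops (m+1) (ins p σ') ↔ p ≠ Fin.last (m+1) := by
  rw [mem_descentTops]
  constructor
  · rintro ⟨i, hlt, heq⟩
    have : i.castSucc = p := (ins p σ').injective (heq.trans (ins_self p σ').symm)
    rw [← this]
    exact (Fin.castSucc_lt_last i).ne
  · intro hp
    set q := p.castPred hp with hq
    refine ⟨q, ?_, ?_⟩
    · have hqp : q.castSucc = p := Fin.castSucc_castPred p hp
      have hne : q.succ ≠ p := by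
        rw [← hqp]; intro hcon
        have := congrArg Fin.val hcon
        simp at this
      obtain ⟨k, hk⟩ := Fin.exists_succAbove_eq hne
      rw [← hk, ins_succAbove, hqp, ins_self]
      exact Fin.castSucc_lt_last _
    · rw [Fin.castSucc_castPred, ins_self]

-- (b)
lemma dt_castSucc {m : ℕ} (p : Fin (m+2)) (σ' : Equiv.Perm (Fin (m+1))) (x : Fin (m+1)) :
    x.castSucc ∈ descentTops (m+1) (ins p σ') ↔
      (x ∈ descentTops m σ' ∧ p ≠ (σ'.symm x).succ) := by
  rw [mem_descentTops]
  constructor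
  · rintro ⟨j, hlt, heq⟩
    have hjp : j.castSucc ≠ p := by
      intro hcon
      rw [hcon, ins_self] at heq
      exact (Fin.castSucc_lt_last x).ne heq.symm
    obtain ⟨k, hk⟩ := Fin.exists_succAbove_eq hjp
    rw [← hk, ins_succAbove] at heq
    have hσk : σ' k = x := Fin.castSucc_injective _ heq
    have hjsp : j.succ ≠ p := by
      intro hcon
      rw [hcon, ins_self] at hlt
      exact absurd hlt (Fin.le_last _).not_gt
    obtain ⟨k₂, hk₂⟩ := Fin.exists_succAbove_eq hjsp
    rw [← hk, ← hk₂, ins_succAbove, ins_succAbove, Fin.castSucc_lt_castSucc_iff] at hlt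
    -- hlt : σ' k₂ < σ' k
    have hkk : k₂ ≠ k := fun hcon => absurd hlt (by rw [hcon]; exact lt_irrefl _)
    have hv1 := congrArg Fin.val hk
    have hv2 := congrArg Fin.val hk₂
    rw [sa_val] at hv1 hv2
    simp only [Fin.coe_castSucc, Fin.val_succ] at hv1 hv2
    have hne : p.val ≠ j.val + 1 := by
      intro hcon
      exact hjsp (Fin.ext (by simp [hcon]))
    have hkkv : k₂.val ≠ k.val := fun hcon => hkk (Fin.ext hcon)
    have hmain : k₂.val = k.val + 1 ∧ p.val ≠ k.val + 1 := by
      split_ifs at hv1 hv2 <;> omega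
    have hklt : k.val < m := by have := k₂.isLt; omega
    have hklast : k ≠ Fin.last m := by
      intro hcon; rw [Fin.ext_iff] at hcon; simp at hcon; omega
    refine ⟨mem_descentTops.mpr ⟨k.castPred hklast, ?_, ?_⟩, ?_⟩
    · have h1 : (k.castPred hklast).succ = k₂ := Fin.ext (by simp [hmain.1])
      have h2 : (k.castPred hklast).castSucc = k := Fin.castSucc_castPred _ _
      rw [h1, h2]
      exact hlt
    · rw [Fin.castSucc_castPred, hσk]
    · have : σ'.symm x = k := by rw [← hσk, Equiv.symm_apply_apply]
      rw [this]
      intro hcon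
      exact hmain.2 (by rw [hcon]; simp)
  · rintro ⟨hx, hp⟩
    rw [mem_descentTops] at hx
    obtain ⟨i, hlt, heq⟩ := hx
    have hsymm : σ'.symm x = i.castSucc := by rw [← heq, Equiv.symm_apply_apply]
    rw [hsymm] at hp
    have hpv : p.val ≠ i.val + 1 := by
      intro hcon
      exact hp (Fin.ext (by simp [hcon]))
    -- positions
    have hj1 : (p.succAbove i.castSucc).val ≤ m := by
      rw [sa_val]
      have := i.isLt
      split_ifs <;> simp_all <;> omega
    set j := (p.succAbove i.castSucc).castPred (by
      intro hcon; rw [Fin.ext_iff] at hcon; simp at hcon; omega) with hj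
    have hjc : j.castSucc = p.succAbove i.castSucc := Fin.castSucc_castPred _ _
    have hjs : j.succ = p.succAbove i.succ := by
      apply Fin.ext
      have e1 := sa_val p i.castSucc
      have e2 := sa_val p i.succ
      simp only [Fin.coe_castSucc, Fin.val_succ] at e1 e2
      have : j.val = (p.succAbove i.castSucc).val := by rw [hj]; simp
      simp only [Fin.val_succ, this, e1, e2]
      split_ifs <;> omega
    refine ⟨j, ?_, ?_⟩
    · rw [hjs, hjc, ins_succAbove, ins_succAbove, Fin.castSucc_lt_castSucc_iff]
      exact hlt
    · rw [hjc, ins_succAbove, heq]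

section main
variable {m : ℕ} (X : Finset (Fin (m+2)))

def Ys : Finset (Fin (m+1)) := Finset.univ.filter fun y => y.castSucc ∈ X

def bad (σ' : Equiv.Perm (Fin (m+1))) : Finset (Fin (m+2)) :=
  ((Ys X).image fun x => (σ'.symm x).succ) ∪
    (if Fin.last (m+1) ∈ X then {Fin.last (m+1)} else ∅)

lemma symm_succ_ne_last {σ' : Equiv.Perm (Fin (m+1))} {x : Fin (m+1)}
    (hx : x ∈ descentTops m σ') : (σ'.symm x).succ ≠ Fin.last (m+1) := by
  obtain ⟨i, _, heq⟩ := mem_descentTops.mp hx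
  have : σ'.symm x = i.castSucc := by rw [← heq, Equiv.symm_apply_apply]
  rw [this]
  intro hcon
  have := congrArg Fin.val hcon
  simp at this
  omega

lemma subset_iff_dt (p : Fin (m+2)) (σ' : Equiv.Perm (Fin (m+1))) :
    X ⊆ descentTops (m+1) (ins p σ') ↔
      (Ys X ⊆ descentTops m σ' ∧ p ∉ bad X σ') := by
  constructor
  · intro h
    have hY : Ys X ⊆ descentTops m σ' := by
      intro y hy
      exact ((dt_castSucc p σ' y).mp (h (Finset.mem_filter.mp hy).2)).1
    refine ⟨hY, ?_⟩
    intro hbad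
    rw [bad, Finset.mem_union] at hbad
    rcases hbad with hb | hb
    · obtain ⟨y, hy, hpy⟩ := Finset.mem_image.mp hb
      exact ((dt_castSucc p σ' y).mp (h (Finset.mem_filter.mp hy).2)).2 hpy.symm
    · split_ifs at hb with hl
      · rw [Finset.mem_singleton] at hb
        exact (dt_last p σ').mp (h hl) hb
      · simp at hb
  · rintro ⟨hQ, hp⟩ z hz
    rcases eq_or_ne z (Fin.last (m+1)) with rfl | hzl
    · rw [dt_last]
      intro hcon
      apply hp
      rw [bad, Finset.mem_union]
      right
      simp [hz, hcon]
    · set y := z.castPred hzl with hy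
      have hyz : y.castSucc = z := Fin.castSucc_castPred z hzl
      rw [← hyz]
      rw [← hyz] at hz
      refine (dt_castSucc p σ' y).mpr ⟨hQ (Finset.mem_filter.mpr ⟨Finset.mem_univ _, hz⟩), ?_⟩
      intro hcon
      apply hp
      rw [bad, Finset.mem_union]
      left
      exact Finset.mem_image.mpr ⟨y, Finset.mem_filter.mpr ⟨Finset.mem_univ _, hz⟩, hcon.symm⟩

lemma img_Ys : (Ys X).image Fin.castSucc = X.erase (Fin.last (m+1)) := by
  ext z
  rw [Finset.mem_image, Finset.mem_erase]
  constructor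
  · rintro ⟨y, hy, rfl⟩
    exact ⟨(Fin.castSucc_lt_last y).ne, (Finset.mem_filter.mp hy).2⟩
  · rintro ⟨hzl, hz⟩
    refine ⟨z.castPred hzl, Finset.mem_filter.mpr ⟨Finset.mem_univ _, ?_⟩, Fin.castSucc_castPred z hzl⟩
    rw [Fin.castSucc_castPred]
    exact hz

lemma card_Ys : (Ys X).card = (X.erase (Fin.last (m+1))).card := by
  rw [← img_Ys, Finset.card_image_of_injective _ (Fin.castSucc_injective _)]

lemma card_bad {σ' : Equiv.Perm (Fin (m+1))} (hQ : Ys X ⊆ descentTops m σ') :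
    (bad X σ').card = X.card := by
  have himg : (((Ys X)).image fun x => (σ'.symm x).succ).card = (Ys X).card :=
    Finset.card_image_of_injective _ ((Fin.succ_injective _).comp σ'.symm.injective)
  rw [bad]
  by_cases hl : Fin.last (m+1) ∈ X
  · rw [if_pos hl, Finset.card_union_of_disjoint, himg, Finset.card_singleton]
    · rw [card_Ys, Finset.card_erase_of_mem hl]
      have : X.card ≠ 0 := Finset.card_ne_zero_of_mem hl
      omega
    · rw [Finset.disjoint_singleton_right]
      intro hcon
      obtain ⟨y, hy, hpy⟩ := Finset.mem_image.mp hcon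
      exact symm_succ_ne_last (hQ hy) hpy
  · rw [if_neg hl, Finset.union_empty, himg, card_Ys, Finset.erase_eq_of_notMem hl]

end main

lemma card_filter_equiv {α β : Type*} [Fintype α] [Fintype β] (e : α ≃ β) (P : β → Prop)
    [DecidablePred P] :
    (Finset.univ.filter fun a => P (e a)).card = (Finset.univ.filter P).card := by
  refine Finset.card_bij (fun a _ => e a) ?_ ?_ ?_
  · intro a ha
    rw [Finset.mem_filter] at ha ⊢
    exact ⟨Finset.mem_univ _, ha.2⟩
  · intro a _ b _ h
    exact e.injective h
  · intro b hb
    refine ⟨e.symm b, ?_, e.apply_symm_apply b⟩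
    rw [Finset.mem_filter]
    refine ⟨Finset.mem_univ _, ?_⟩
    simpa using (Finset.mem_filter.mp hb).2

lemma card_filter_prod {α β : Type*} [Fintype α] [Fintype β] (P : α × β → Prop)
    [DecidablePred P] :
    (Finset.univ.filter P).card = ∑ b : β, (Finset.univ.filter fun a => P (a, b)).card := by
  classical
  simp only [Finset.card_filter]
  exact Fintype.sum_prod_type_right (f := fun i => if P i then 1 else 0)

lemma prod_aux_notmem {m : ℕ} (X : Finset (Fin (m+2))) (k : ℕ) (h : X.card = k)
    (hk : k = (Ys X).card) :
    ∏ i : Fin k, ((X.orderEmbOfFin h i).val + 1 - (i.val + 1))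
      = ∏ i : Fin (Ys X).card, (((Ys X).orderEmbOfFin rfl i).val + 1 - (i.val + 1)) := by
  subst hk
  have hf := Finset.orderEmbOfFin_unique h
      (f := fun i => ((Ys X).orderEmbOfFin rfl i).castSucc)
      (fun i => (Finset.mem_filter.mp (Finset.orderEmbOfFin_mem (Ys X) rfl i)).2)
      (Fin.strictMono_castSucc.comp ((Ys X).orderEmbOfFin rfl).strictMono)
  refine Finset.prod_congr rfl fun i _ => ?_
  rw [← congrFun hf i]
  simp

lemma prod_aux_mem {m : ℕ} (X : Finset (Fin (m+2))) (hl : Fin.last (m+1) ∈ X) (k : ℕ)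
    (h : X.card = k) (hk : k = (Ys X).card + 1) :
    ∏ i : Fin k, ((X.orderEmbOfFin h i).val + 1 - (i.val + 1))
      = (m + 1 - (Ys X).card) *
          ∏ i : Fin (Ys X).card, (((Ys X).orderEmbOfFin rfl i).val + 1 - (i.val + 1)) := by
  subst hk
  set c := (Ys X).card with hc
  set f : Fin (c+1) → Fin (m+2) := fun i =>
    if hi : i.val < c then ((Ys X).orderEmbOfFin rfl ⟨i.val, hi⟩).castSucc
    else Fin.last (m+1) with hfdef
  have hmono : StrictMono f := by
    intro i j hij
    have hijv : i.val < j.val := hij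
    rw [hfdef]
    dsimp only
    by_cases hi : i.val < c <;> by_cases hj : j.val < c
    · rw [dif_pos hi, dif_pos hj, Fin.castSucc_lt_castSucc_iff]
      exact ((Ys X).orderEmbOfFin rfl).strictMono (by exact hijv)
    · rw [dif_pos hi, dif_neg hj]
      exact Fin.castSucc_lt_last _
    · omega
    · exfalso
      have := i.isLt
      have := j.isLt
      omega
  have hmem : ∀ i, f i ∈ X := by
    intro i
    rw [hfdef]
    dsimp only
    split_ifs with hi
    · exact (Finset.mem_filter.mp (Finset.orderEmbOfFin_mem (Ys X) rfl _)).2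
    · exact hl
  have hf := Finset.orderEmbOfFin_unique h hmem hmono
  rw [Fin.prod_univ_castSucc]
  have hlast : (X.orderEmbOfFin h (Fin.last c)).val + 1 - ((Fin.last c).val + 1)
      = m + 1 - c := by
    rw [← congrFun hf (Fin.last c)]
    rw [hfdef]
    simp
  rw [hlast, mul_comm]
  congr 1
  refine Finset.prod_congr rfl fun i _ => ?_
  rw [← congrFun hf i.castSucc]
  rw [hfdef]
  dsimp only
  rw [dif_pos (by simp [i.isLt]; exact i.isLt : (i.castSucc).val < c)]
  simp


/-- Let `n = m + 1 ≥ 1` and let `X = {x_1 < ... < x_s} ⊆ {1,...,n}` (elements of `Fin n`,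
where the element `x : Fin n` represents the value `x + 1 ∈ {1,...,n}`). Then the number of
permutations `σ ∈ S_n` with `X ⊆ DT(σ)` equals `(n − s)! · ∏_{i=1}^{s} (x_i − i)`. -/
theorem stmt16 (m : ℕ) (X : Finset (Fin (m + 1))) :
    (Finset.univ.filter fun σ : Equiv.Perm (Fin (m + 1)) => X ⊆ descentTops m σ).card =
      (m + 1 - X.card).factorial *
        ∏ i : Fin X.card,
          ((((X.orderIsoOfFin rfl i : Fin (m + 1)) : ℕ) + 1) - ((i : ℕ) + 1)) := by
  induction m with
  | zero =>
    have hz : ∀ x : Fin (0+1), x = 0 := fun x => Fin.ext (by omega)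
    by_cases h0 : (0 : Fin (0+1)) ∈ X
    · have hX : X = {0} := by
        ext x
        rw [hz x]
        simp [h0]
      subst hX
      have hdt : ∀ σ : Equiv.Perm (Fin (0+1)), descentTops 0 σ = ∅ := by
        intro σ
        simp [descentTops]
      have hL : (Finset.univ.filter fun σ : Equiv.Perm (Fin (0+1)) =>
          ({0} : Finset (Fin (0+1))) ⊆ descentTops 0 σ) = ∅ := by
        rw [Finset.filter_eq_empty_iff]
        intro σ _
        rw [hdt]
        simp
      rw [hL]
      have hR : (∏ i : Fin ({0} : Finset (Fin (0+1))).card,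
          ((((({0} : Finset (Fin (0+1))).orderIsoOfFin rfl i : Fin (0+1)) : ℕ) + 1)
            - ((i : ℕ) + 1))) = 0 := by
        apply Finset.prod_eq_zero (Finset.mem_univ (⟨0, by simp⟩ : Fin ({0} : Finset (Fin (0+1))).card))
        have hmem := (({0} : Finset (Fin (0+1))).orderIsoOfFin rfl ⟨0, by simp⟩).2
        rw [Finset.mem_singleton] at hmem
        rw [hmem]
        simp
      rw [hR, mul_zero, Finset.card_empty]
    · have hX : X = ∅ := by
        rw [Finset.eq_empty_iff_forall_notMem]
        intro x hx
        exact h0 (hz x ▸ hx)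
      subst hX
      have hL : (Finset.univ.filter fun σ : Equiv.Perm (Fin (0+1)) =>
          (∅ : Finset (Fin (0+1))) ⊆ descentTops 0 σ) = Finset.univ := by
        rw [Finset.filter_eq_self]
        intro σ _
        exact Finset.empty_subset _
      rw [hL]
      have hR : (∏ i : Fin (∅ : Finset (Fin (0+1))).card,
          (((((∅ : Finset (Fin (0+1))).orderIsoOfFin rfl i : Fin (0+1)) : ℕ) + 1)
            - ((i : ℕ) + 1))) = 1 :=
        Finset.prod_eq_one fun i _ => absurd i.isLt (by simp)
      rw [hR]
      simp [Finset.card_univ, Fintype.card_perm]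
  | succ m IH =>
    simp only [Finset.coe_orderIsoOfFin_apply]
    have key : ∀ σ' : Equiv.Perm (Fin (m+1)),
        (Finset.univ.filter fun p : Fin (m+2) => X ⊆ descentTops (m+1) (ins p σ')).card =
          if Ys X ⊆ descentTops m σ' then (m + 2 - X.card) else 0 := by
      intro σ'
      simp only [subset_iff_dt]
      by_cases hQ : Ys X ⊆ descentTops m σ'
      · rw [if_pos hQ]
        simp only [hQ, true_and]
        have : (Finset.univ.filter fun p : Fin (m+2) => p ∉ bad X σ') =
            Finset.univ \ bad X σ' := by
          ext p; simp
        rw [this, Finset.card_sdiff_of_subset (Finset.subset_univ _), card_bad X hQ]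
        simp
      · rw [if_neg hQ]
        rw [Finset.card_eq_zero, Finset.filter_eq_empty_iff]
        intro p _
        simp [hQ]
    have main : (Finset.univ.filter fun σ : Equiv.Perm (Fin (m+2)) =>
        X ⊆ descentTops (m+1) σ).card =
          (m + 2 - X.card) *
            (Finset.univ.filter fun σ' : Equiv.Perm (Fin (m+1)) =>
              Ys X ⊆ descentTops m σ').card := by
      rw [← card_filter_equiv (insEquiv m) (fun σ => X ⊆ descentTops (m+1) σ)]
      rw [card_filter_prod (fun z : Fin (m+2) × Equiv.Perm (Fin (m+1)) =>
        X ⊆ descentTops (m+1) (insEquiv m z))]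
      have : ∀ σ' : Equiv.Perm (Fin (m+1)),
          (Finset.univ.filter fun p : Fin (m+2) =>
            X ⊆ descentTops (m+1) (insEquiv m (p, σ'))).card =
          if Ys X ⊆ descentTops m σ' then (m + 2 - X.card) else 0 := fun σ' => key σ'
      rw [Finset.sum_congr rfl fun σ' _ => this σ']
      rw [← Finset.sum_filter, Finset.sum_const, smul_eq_mul, mul_comm]
    rw [main, IH (Ys X)]
    simp only [Finset.coe_orderIsoOfFin_apply]
    have hYle : (Ys X).card ≤ m + 1 := by
      have := Finset.card_le_univ (Ys X)
      simpa using this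
    by_cases hl : Fin.last (m+1) ∈ X
    · have hc : X.card = (Ys X).card + 1 := by
        have h1 := card_Ys X
        rw [Finset.card_erase_of_mem hl] at h1
        have : X.card ≠ 0 := Finset.card_ne_zero_of_mem hl
        omega
      rw [prod_aux_mem X hl X.card rfl hc, hc]
      have h2 : m + 1 + 1 - ((Ys X).card + 1) = m + 1 - (Ys X).card := by omega
      rw [h2]
      ring
    · have hc : X.card = (Ys X).card := by
        have h1 := card_Ys X
        rw [Finset.erase_eq_of_notMem hl] at h1
        omega
      rw [prod_aux_notmem X X.card rfl hc, hc]
      have h2 : m + 1 + 1 - (Ys X).card = (m + 1 - (Ys X).card) + 1 := by omega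
      rw [h2, Nat.factorial_succ]
      ring
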